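/- Let 1 → Π → Γ → G → 1 be an extension of compact Lie groups and let p : E → E/Π be a principal (Π; Γ)-bundle. Then p satisfies the principal-bundle equivariant covering homotopy property — i.e., p has the right lifting property with respect to all maps X → X × I, x ↦ (x, 0), where X is a principal (Π; Γ)-bundle, in the category of Γ-spaces — if and only if p is a Hurewicz Γ-fibration. -/

import Mathlib

open MulAction Topology

universe u v w

/-- A map `p : E → B` of `Γ`-spaces is a Hurewicz `Γ`-fibration if it has the right lifting
property, in the category of `Γ`-spaces, with respect to all maps `X → X × I`, `x ↦ (x, 0)`,
where `X` is a `Γ`-space. -/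
def IsHurewiczGFibration (G : Type*) [Group G] [TopologicalSpace G] {E B : Type*}
    [TopologicalSpace E] [TopologicalSpace B] [MulAction G E] [MulAction G B]
    (p : E → B) : Prop :=
  ∀ (X : Type w) [TopologicalSpace X] [MulAction G X] [ContinuousSMul G X]
    (H : X × unitInterval → B), Continuous H →
    (∀ (g : G) (x : X) (t : unitInterval), H (g • x, t) = g • H (x, t)) →
    ∀ (f : X → E), Continuous f → (∀ (g : G) (x : X), f (g • x) = g • f x) →
    (∀ x, p (f x) = H (x, 0)) →
    ∃ L : X × unitInterval → E, Continuous L ∧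
      (∀ (g : G) (x : X) (t : unitInterval), L (g • x, t) = g • L (x, t)) ∧
      (∀ x t, p (L (x, t)) = H (x, t)) ∧ (∀ x, L (x, 0) = f x)

/-- A local trivialisation of a `Π`-free `Γ`-space around a point `e`: a `Π`-homeomorphism
from `Π × V` (with `Π` acting by left multiplication on the first factor and trivially on
`V`) onto an open neighbourhood of `e`. -/
structure ProdChart (Γ : Type u) [Group Γ] [TopologicalSpace Γ] (N : Subgroup Γ)
    (E : Type v) [TopologicalSpace E] [MulAction Γ E] (e : E) where
  V : Type v
  [tv : TopologicalSpace V]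
  ψ : ↥N × V → E
  emb : Topology.IsEmbedding ψ
  openRange : IsOpen (Set.range ψ)
  mem : e ∈ Set.range ψ
  equivariant : ∀ (n m : ↥N) (v : V), ψ (n * m, v) = (n : Γ) • ψ (m, v)

/-- A principal `(Π; Γ)`-bundle: a `Π`-free `Γ`-space `E` admitting a `Π`-invariant open
cover `{U i}` with each `U i` `Π`-homeomorphic to some `Π × V i` with trivial `Π`-action on
`V i`.  (The bundle projection is the quotient map `E → E/Π`.) -/
def IsPrincipalBundle (Γ : Type u) [Group Γ] [TopologicalSpace Γ] (N : Subgroup Γ)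
    (E : Type v) [TopologicalSpace E] [MulAction Γ E] : Prop :=
  (∀ (n : ↥N) (e : E), (n : Γ) • e = e → n = 1) ∧
  ∀ e : E, Nonempty (ProdChart Γ N E e)

variable {Γ : Type u} [Group Γ] [TopologicalSpace Γ] [IsTopologicalGroup Γ] [CompactSpace Γ]
  (N : Subgroup Γ) [N.Normal]

/-- `Γ` acts on the orbit space `E/N` by a normal subgroup `N`. -/
instance orbitQuotAction (Z : Type*) [MulAction Γ Z] :
    MulAction Γ (Quotient (orbitRel ↥N Z)) where
  smul γ := Quotient.map (γ • ·) (by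
    rintro z z' ⟨n, rfl⟩
    refine ⟨⟨γ * (n : Γ) * γ⁻¹, Subgroup.Normal.conj_mem ‹N.Normal› _ n.2 γ⟩, ?_⟩
    show (γ * (n : Γ) * γ⁻¹) • (γ • z') = γ • (n : Γ) • z'
    rw [← mul_smul, ← mul_smul]
    congr 1
    group)
  one_smul := by rintro ⟨z⟩; exact congrArg (Quotient.mk _) (one_smul _ _)
  mul_smul := by rintro g g' ⟨z⟩; exact congrArg (Quotient.mk _) (mul_smul _ _ _)

/-- A principal `(Π; Γ)`-bundle `p : E → E/Π` satisfies the principal-bundle equivariant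
covering homotopy property if it has the right lifting property, in the category of
`Γ`-spaces, with respect to all maps `X → X × I`, `x ↦ (x, 0)`, where `X` is a principal
`(Π; Γ)`-bundle. -/
def SatisfiesPrincipalECHP (E : Type v) [TopologicalSpace E] [MulAction Γ E] : Prop :=
  ∀ (X : Type w) [TopologicalSpace X] [MulAction Γ X] [ContinuousSMul Γ X],
    IsPrincipalBundle Γ N X →
    ∀ (H : X × unitInterval → Quotient (orbitRel ↥N E)), Continuous H →
    (∀ (g : Γ) (x : X) (t : unitInterval), H (g • x, t) = g • H (x, t)) →
    ∀ (f : X → E), Continuous f → (∀ (g : Γ) (x : X), f (g • x) = g • f x) →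
    (∀ x, Quotient.mk (orbitRel ↥N E) (f x) = H (x, 0)) →
    ∃ L : X × unitInterval → E, Continuous L ∧
      (∀ (g : Γ) (x : X) (t : unitInterval), L (g • x, t) = g • L (x, t)) ∧
      (∀ x t, Quotient.mk (orbitRel ↥N E) (L (x, t)) = H (x, t)) ∧ (∀ x, L (x, 0) = f x)


/-- Pulling back a chart: if `f : X → E` is a continuous `Γ`-map and `E` has a chart
around `f x`, then `X` has a chart around `x`. -/
private lemma pullback_chart {X : Type w} [TopologicalSpace X] [MulAction Γ X]
    [ContinuousSMul Γ X] {E : Type v} [TopologicalSpace E] [MulAction Γ E]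
    (f : X → E) (hf : Continuous f) (hfe : ∀ (g : Γ) (x : X), f (g • x) = g • f x)
    (x : X) (C : ProdChart Γ N E (f x)) : Nonempty (ProdChart Γ N X x) := by
  letI := C.tv
  -- the homeomorphism onto the range of the chart
  let h : (↥N × C.V) ≃ₜ Set.range C.ψ := C.emb.toHomeomorph
  -- the "translation function"
  let ρ : Set.range C.ψ → ↥N := fun z => (h.symm z).1
  have hρcont : Continuous ρ := h.symm.continuous.fst
  have hρ : ∀ (n : ↥N) (v : C.V) (hz : C.ψ (n, v) ∈ Set.range C.ψ), ρ ⟨_, hz⟩ = n := by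
    intro n v hz
    have : h.symm ⟨C.ψ (n, v), hz⟩ = (n, v) := by
      apply h.injective; rw [Homeomorph.apply_symm_apply]; rfl
    simpa [ρ] using congrArg Prod.fst this
  -- the slice
  let V' : Type w := {y : X // ∃ v, f y = C.ψ (1, v)}
  have hmemrange : ∀ (n : ↥N) (y : V'), f ((n : Γ) • y.1) ∈ Set.range C.ψ := by
    rintro n ⟨y, v, hv⟩
    refine ⟨(n, v), ?_⟩
    show C.ψ (n, v) = f ((n : Γ) • y)
    rw [hfe, hv, ← C.equivariant, mul_one]
  have key : ∀ (n : ↥N) (y : V'), ρ ⟨f ((n : Γ) • y.1), hmemrange n y⟩ = n := by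
    rintro n ⟨y, v, hv⟩
    have hfy : f ((n : Γ) • y) = C.ψ (n, v) := by
      rw [hfe, hv, ← C.equivariant, mul_one]
    have hz : C.ψ (n, v) ∈ Set.range C.ψ := ⟨_, rfl⟩
    have : (⟨f ((n : Γ) • y), hmemrange n ⟨y, ⟨v, hv⟩⟩⟩ : Set.range C.ψ) = ⟨C.ψ (n, v), hz⟩ :=
      Subtype.ext hfy
    rw [this, hρ]
  -- the set underlying the range of the new chart
  let S : Set X := f ⁻¹' (Set.range C.ψ)
  have hScont : Continuous fun z : S => ρ ⟨f z.1, z.2⟩ :=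
    hρcont.comp (Continuous.subtype_mk (hf.comp continuous_subtype_val) _)
  let e : (↥N × V') ≃ S :=
    { toFun := fun p => ⟨(p.1 : Γ) • p.2.1, hmemrange p.1 p.2⟩
      invFun := fun z =>
        (ρ ⟨f z.1, z.2⟩, ⟨((ρ ⟨f z.1, z.2⟩ : ↥N) : Γ)⁻¹ • z.1, by
          obtain ⟨⟨n, v⟩, hnv⟩ := z.2
          have hz : C.ψ (n, v) ∈ Set.range C.ψ := ⟨_, rfl⟩
          have hze : (⟨f z.1, z.2⟩ : Set.range C.ψ) = ⟨C.ψ (n, v), hz⟩ := Subtype.ext hnv.symm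
          rw [hze, hρ]
          refine ⟨v, ?_⟩
          rw [hfe, hnv.symm]
          show ((n⁻¹ : ↥N) : Γ) • C.ψ (n, v) = C.ψ (1, v)
          rw [← C.equivariant, inv_mul_cancel]⟩)
      left_inv := by
        rintro ⟨n, y⟩
        have := key n y
        ext
        · simpa using this
        · show ((ρ ⟨f ((n : Γ) • y.1), _⟩ : ↥N) : Γ)⁻¹ • ((n : Γ) • y.1) = y.1
          rw [this]
          exact inv_smul_smul _ _
      right_inv := by
        rintro ⟨z, hz⟩
        ext
        show (((ρ ⟨f z, hz⟩ : ↥N) : Γ)) • (((ρ ⟨f z, hz⟩ : ↥N) : Γ))⁻¹ • z = z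
        exact smul_inv_smul _ _ }
  have he_cont : Continuous (fun p : ↥N × V' => e p) := by
    apply Continuous.subtype_mk
    exact (continuous_subtype_val.comp continuous_fst).smul
      (continuous_subtype_val.comp continuous_snd)
  have he_symm_cont : Continuous (fun z : S => e.symm z) := by
    refine Continuous.prodMk hScont (Continuous.subtype_mk ?_ _)
    exact ((continuous_subtype_val.comp hScont).inv).smul continuous_subtype_val
  let htop : (↥N × V') ≃ₜ S := ⟨e, he_cont, he_symm_cont⟩
  have hSopen : IsOpen S := C.openRange.preimage hf
  have hrange : Set.range (fun p : ↥N × V' => ((htop p : S) : X)) = S := by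
    ext z
    constructor
    · rintro ⟨p, rfl⟩; exact (htop p).2
    · intro hz
      exact ⟨htop.symm ⟨z, hz⟩, congrArg Subtype.val (htop.apply_symm_apply ⟨z, hz⟩)⟩
  refine ⟨{ V := V', ψ := fun p => ((htop p : S) : X), emb := ?_, openRange := ?_,
            mem := ?_, equivariant := ?_ }⟩
  · exact IsEmbedding.subtypeVal.comp htop.isEmbedding
  · rw [hrange]; exact hSopen
  · rw [hrange]; exact C.mem
  · intro n m v
    show ((n * m : ↥N) : Γ) • v.1 = (n : Γ) • ((m : Γ) • v.1)
    rw [← mul_smul]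
    rfl

/-- Any `Γ`-space admitting a continuous `Γ`-map to a principal `(Π; Γ)`-bundle is itself a
principal `(Π; Γ)`-bundle. -/
private lemma pullback_principal {X : Type w} [TopologicalSpace X] [MulAction Γ X]
    [ContinuousSMul Γ X] {E : Type v} [TopologicalSpace E] [MulAction Γ E]
    (hE : IsPrincipalBundle Γ N E)
    (f : X → E) (hf : Continuous f) (hfe : ∀ (g : Γ) (x : X), f (g • x) = g • f x) :
    IsPrincipalBundle Γ N X := by
  refine ⟨fun n x hx => ?_, fun x => ?_⟩
  · exact hE.1 n (f x) (by rw [← hfe, hx])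
  · obtain ⟨C⟩ := hE.2 (f x)
    exact pullback_chart N f hf hfe x C

/-- Let `1 → Π → Γ → G → 1` be an extension of compact Lie groups and
`p : E → E/Π` a principal `(Π; Γ)`-bundle.  Then `p` satisfies the principal-bundle
equivariant covering homotopy property iff `p` is a Hurewicz `Γ`-fibration. -/
theorem principalECHP_iff_isHurewiczGammaFibration
    (hN : IsClosed (N : Set Γ))
    {E : Type v} [TopologicalSpace E] [MulAction Γ E] [ContinuousSMul Γ E]
    (hE : IsPrincipalBundle Γ N E) :
    SatisfiesPrincipalECHP.{u, v, w} N E ↔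
      IsHurewiczGFibration.{w} Γ (Quotient.mk (orbitRel ↥N E)) := by
  constructor
  · intro hECHP X _ _ _ H hH hHeq f hf hfeq hcomp
    exact hECHP X (pullback_principal N hE f hf hfeq) H hH hHeq f hf hfeq hcomp
  · intro hFib X _ _ _ _ H hH hHeq f hf hfeq hcomp
    exact hFib X H hH hHeq f hf hfeq hcomp
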